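/- Let n ≥ 1, let A and B be n×n real symmetric positive definite matrices, and let t ∈ [0,1]. Then ((1−t)·A⁻¹ + t·B⁻¹)⁻¹ ≤ (1−t)·A + t·B in the Loewner order, i.e. the matrix (1−t)·A + t·B − ((1−t)·A⁻¹ + t·B⁻¹)⁻¹ is positive semidefinite. -/

import Mathlib

open Matrix

lemma smulPSD {n : ℕ} {c : ℝ} (hc : 0 ≤ c) {M : Matrix (Fin n) (Fin n) ℝ}
    (hM : M.PosSemidef) : (c • M).PosSemidef := by
  refine Matrix.PosSemidef.of_dotProduct_mulVec_nonneg ?_ (fun x => ?_)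
  · rw [Matrix.IsHermitian, conjTranspose_smul, hM.1.eq]
    simp [starRingEnd_apply]
  · rw [smul_mulVec, dotProduct_smul, smul_eq_mul]
    exact mul_nonneg hc (hM.dotProduct_mulVec_nonneg x)

lemma transp_eq {n : ℕ} {M : Matrix (Fin n) (Fin n) ℝ} (hM : M.IsHermitian) :
    Mᵀ = M := by
  rw [← conjTranspose_eq_transpose_of_trivial, hM.eq]

lemma smulPD {n : ℕ} {c : ℝ} (hc : 0 < c) {M : Matrix (Fin n) (Fin n) ℝ}
    (hM : M.PosDef) : (c • M).PosDef := by
  refine Matrix.PosDef.of_dotProduct_mulVec_pos (smulPSD hc.le hM.posSemidef).1 (fun x hx => ?_)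
  rw [smul_mulVec, dotProduct_smul, smul_eq_mul]
  exact mul_pos hc (hM.dotProduct_mulVec_pos hx)

lemma key {n : ℕ} {M : Matrix (Fin n) (Fin n) ℝ} (hM : M.PosDef)
    (x y : Fin n → ℝ) :
    2 * (x ⬝ᵥ y) - y ⬝ᵥ (M⁻¹ *ᵥ y) ≤ x ⬝ᵥ (M *ᵥ x) := by
  have hdet : IsUnit M.det := hM.det_pos.ne'.isUnit
  have hinv : M * M⁻¹ = 1 := mul_nonsing_inv _ hdet
  set z : Fin n → ℝ := x - M⁻¹ *ᵥ y with hz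
  have h0 : 0 ≤ z ⬝ᵥ (M *ᵥ z) := by simpa using hM.posSemidef.dotProduct_mulVec_nonneg z
  have hMz : M *ᵥ z = M *ᵥ x - y := by
    rw [hz, mulVec_sub, mulVec_mulVec, hinv, one_mulVec]
  have hsymmInv : (M⁻¹ *ᵥ y) ⬝ᵥ (M *ᵥ x) = y ⬝ᵥ x := by
    rw [dotProduct_mulVec, ← mulVec_transpose, transp_eq hM.isHermitian,
      mulVec_mulVec, hinv, one_mulVec]
  have hinvsym : (M⁻¹ *ᵥ y) ⬝ᵥ y = y ⬝ᵥ (M⁻¹ *ᵥ y) := dotProduct_comm _ _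
  have hxy : x ⬝ᵥ y = y ⬝ᵥ x := dotProduct_comm _ _
  have hexp : z ⬝ᵥ (M *ᵥ z) =
      x ⬝ᵥ (M *ᵥ x) - 2 * (x ⬝ᵥ y) + y ⬝ᵥ (M⁻¹ *ᵥ y) := by
    rw [hMz, hz, sub_dotProduct, dotProduct_sub, dotProduct_sub, hsymmInv, hinvsym, hxy]
    ring
  linarith

theorem stmt0 (n : ℕ) (hn : 1 ≤ n) (A B : Matrix (Fin n) (Fin n) ℝ)
    (hA : A.PosDef) (hB : B.PosDef) (t : ℝ) (ht : t ∈ Set.Icc (0 : ℝ) 1) :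
    ((1 - t) • A + t • B - ((1 - t) • A⁻¹ + t • B⁻¹)⁻¹).PosSemidef := by
  obtain ⟨ht0, ht1⟩ := ht
  have h1t : 0 ≤ 1 - t := by linarith
  -- C is positive definite
  have hC : ((1 - t) • A⁻¹ + t • B⁻¹).PosDef := by
    rcases lt_or_eq_of_le ht1 with h | h
    · have h1 : ((1 - t) • A⁻¹).PosDef := smulPD (by linarith) hA.inv
      exact h1.add_posSemidef (smulPSD ht0 hB.inv.posSemidef)
    · subst h
      have h2 : ((1 : ℝ) • B⁻¹).PosDef := smulPD one_pos hB.inv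
      exact (Matrix.PosDef.posSemidef_add (smulPSD h1t hA.inv.posSemidef) h2 : _)
  set C := (1 - t) • A⁻¹ + t • B⁻¹ with hCdef
  have hCdet : IsUnit C.det := hC.det_pos.ne'.isUnit
  have hCinv : C * C⁻¹ = 1 := mul_nonsing_inv _ hCdet
  refine Matrix.PosSemidef.of_dotProduct_mulVec_nonneg ?_ (fun x => ?_)
  · have hAh : ((1 - t) • A).IsHermitian := by
      rw [Matrix.IsHermitian, conjTranspose_smul, hA.isHermitian.eq]; simp [starRingEnd_apply]
    have hBh : (t • B).IsHermitian := by
      rw [Matrix.IsHermitian, conjTranspose_smul, hB.isHermitian.eq]; simp [starRingEnd_apply]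
    exact (hAh.add hBh).sub hC.isHermitian.inv
  · simp only [sub_mulVec, dotProduct_sub, add_mulVec, dotProduct_add, smul_mulVec,
      dotProduct_smul, smul_eq_mul]
    set y : Fin n → ℝ := C⁻¹ *ᵥ x with hy
    have hCy : C *ᵥ y = x := by rw [hy, mulVec_mulVec, hCinv, one_mulVec]
    have hform : x ⬝ᵥ (C⁻¹ *ᵥ x) = 2 * (x ⬝ᵥ y) - y ⬝ᵥ (C *ᵥ y) := by
      rw [← hy, hCy, dotProduct_comm y x]; ring
    have hCyy : y ⬝ᵥ (C *ᵥ y) = (1 - t) * (y ⬝ᵥ (A⁻¹ *ᵥ y)) + t * (y ⬝ᵥ (B⁻¹ *ᵥ y)) := by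
      rw [hCdef, add_mulVec, dotProduct_add, smul_mulVec, smul_mulVec,
        dotProduct_smul, dotProduct_smul, smul_eq_mul, smul_eq_mul]
    have hAineq := key hA x y
    have hBineq := key hB x y
    have h1 : x ⬝ᵥ (C⁻¹ *ᵥ x) ≤ (1 - t) * (x ⬝ᵥ (A *ᵥ x)) + t * (x ⬝ᵥ (B *ᵥ x)) := by
      rw [hform, hCyy]
      nlinarith [mul_le_mul_of_nonneg_left hAineq h1t, mul_le_mul_of_nonneg_left hBineq ht0]
    have := star_trivial x
    simp only [star_trivial] at *
    linarith
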